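/- Let a > 0 and let F : [1,∞) × ℝ → ℂ be measurable, such that for almost every ξ ∈ ℝ the functions t ↦ F(t,ξ) and t ↦ F(t,−ξ) are C¹ and satisfy F_t(t,ξ) = −i ξ² F(t,ξ) + i a² t^{−1−2ia²} conj(F(t,−ξ)). Assume F(1,·) ∈ L²(ℝ). Then there is a constant C depending only on a such that for all 1 ≤ t₁ ≤ t₂, the function A_{t₁,t₂}(ξ) = ∫_{t₁}^{t₂} e^{i s ξ²} conj(F(s,−ξ)) s^{−1−2ia²} ds satisfies ‖A_{t₁,t₂}‖_{L²({|ξ| ≥ 1})} ≤ C t₁^{−1} ‖F(1,·)‖_{L²(ℝ)}. -/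

import Mathlib

open MeasureTheory Complex Set

set_option maxHeartbeats 1000000

noncomputable section

lemma hasDerivAt_expLog (c : ℂ) {t : ℝ} (ht : 0 < t) :
    HasDerivAt (fun s : ℝ => Complex.exp (c * (Real.log s : ℂ)))
      (c / (t:ℂ) * Complex.exp (c * (Real.log t : ℂ))) t := by
  have h1 : HasDerivAt (fun s : ℝ => ((Real.log s : ℝ) : ℂ)) ((t⁻¹ : ℝ) : ℂ) t :=
    (Real.hasDerivAt_log (ne_of_gt ht)).ofReal_comp
  have h2 := (h1.const_mul c).cexp
  convert h2 using 1
  push_cast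
  ring

lemma norm_expLog (c : ℂ) (x : ℝ) :
    ‖Complex.exp (c * (x : ℂ))‖ = Real.exp (c.re * x) := by
  rw [Complex.norm_exp]
  congr 1
  simp [Complex.mul_re]

lemma energy (a ξ ε : ℝ) (ha : 0 < a) (hξ : 1 ≤ ξ^2) (hε : |ε| ≤ 1)
    (u : ℝ → ℂ)
    (hu : ∀ t ∈ Ici (1:ℝ), HasDerivWithinAt u
      (Complex.I * ((a^2/t - ξ^2 : ℝ) : ℂ) * u t
        + (ε:ℂ) * Complex.I * ((a^2/t : ℝ) : ℂ) * (starRingEnd ℂ) (u t)) (Ici 1) t) :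
    ∀ t ∈ Ici (1:ℝ),
      Complex.normSq (u t) ≤
        2 * Real.exp 1 * Real.exp (2*a^2*(max 1 (4*a^2))) * Complex.normSq (u 1) := by
  set T₀ : ℝ := max 1 (4*a^2) with hT₀def
  have hT₀1 : (1:ℝ) ≤ T₀ := le_max_left _ _
  have hT₀a : 4*a^2 ≤ T₀ := le_max_right _ _
  have ha2 : 0 < a^2 := by positivity
  set X : ℝ → ℝ := fun t => (u t).re with hXdef
  set Y : ℝ → ℝ := fun t => (u t).im with hYdef
  set α : ℝ → ℝ := fun t => ξ^2 - (1+ε)*(a^2*t⁻¹) with hαdef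
  set β : ℝ → ℝ := fun t => ξ^2 - (1-ε)*(a^2*t⁻¹) with hβdef
  have hucont : ContinuousOn u (Ici 1) := fun t ht => (hu t ht).continuousWithinAt
  have hXcont : ContinuousOn X (Ici 1) := Complex.continuous_re.comp_continuousOn hucont
  have hYcont : ContinuousOn Y (Ici 1) := Complex.continuous_im.comp_continuousOn hucont
  -- derivatives for t > 1
  have hX : ∀ t : ℝ, 1 < t → HasDerivAt X (β t * Y t) t := by
    intro t ht
    have hD := ((hu t (le_of_lt ht)).hasDerivAt (Ici_mem_nhds ht))
    have h1 := Complex.reCLM.hasFDerivAt.comp_hasDerivAt t hD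
    convert h1 using 1
    · rfl
    · rfl
    · rfl
    show β t * Y t = (Complex.I * ((a^2/t - ξ^2 : ℝ) : ℂ) * u t
        + (ε:ℂ) * Complex.I * ((a^2/t : ℝ) : ℂ) * (starRingEnd ℂ) (u t)).re
    have ht0 : t ≠ 0 := by linarith
    simp [hβdef, hYdef, Complex.mul_re, Complex.mul_im, div_eq_mul_inv, ← Complex.ofReal_pow]
    field_simp
    ring
  have hY : ∀ t : ℝ, 1 < t → HasDerivAt Y (-(α t) * X t) t := by
    intro t ht
    have hD := ((hu t (le_of_lt ht)).hasDerivAt (Ici_mem_nhds ht))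
    have h1 := Complex.imCLM.hasFDerivAt.comp_hasDerivAt t hD
    convert h1 using 1
    · rfl
    · rfl
    · rfl
    show -(α t) * X t = (Complex.I * ((a^2/t - ξ^2 : ℝ) : ℂ) * u t
        + (ε:ℂ) * Complex.I * ((a^2/t : ℝ) : ℂ) * (starRingEnd ℂ) (u t)).im
    have ht0 : t ≠ 0 := by linarith
    simp [hαdef, hXdef, Complex.mul_re, Complex.mul_im, div_eq_mul_inv, ← Complex.ofReal_pow]
    field_simp
    ring
  -- derivatives of the coefficients
  have hαd : ∀ t : ℝ, 1 < t → HasDerivAt α ((1+ε)*(a^2*(t^2)⁻¹)) t := by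
    intro t ht
    have h1 : HasDerivAt (fun s : ℝ => s⁻¹) (-(t^2)⁻¹) t := hasDerivAt_inv (by linarith)
    have h2 := ((h1.const_mul (a^2)).const_mul (1+ε)).const_sub (ξ^2)
    convert h2 using 1
    · rfl
    · rfl
    ring
  have hβd : ∀ t : ℝ, 1 < t → HasDerivAt β ((1-ε)*(a^2*(t^2)⁻¹)) t := by
    intro t ht
    have h1 : HasDerivAt (fun s : ℝ => s⁻¹) (-(t^2)⁻¹) t := hasDerivAt_inv (by linarith)
    have h2 := ((h1.const_mul (a^2)).const_mul (1-ε)).const_sub (ξ^2)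
    convert h2 using 1
    · rfl
    · rfl
    ring
  have hεb := abs_le.mp hε
  -- bounds on coefficients for t ≥ T₀
  have hαβ : ∀ x : ℝ, T₀ ≤ x → ξ^2/2 ≤ α x ∧ α x ≤ ξ^2 ∧ ξ^2/2 ≤ β x ∧ β x ≤ ξ^2 := by
    intro x hx
    have hx0 : 0 < x := by linarith
    have hxinv : 0 < x⁻¹ := inv_pos.mpr hx0
    have hxx : x * x⁻¹ = 1 := mul_inv_cancel₀ (ne_of_gt hx0)
    have h4 : 4*a^2 ≤ x := le_trans hT₀a hx
    have h5 : 4*a^2*x⁻¹ ≤ 1 := by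
      calc 4*a^2*x⁻¹ ≤ x*x⁻¹ := by
            apply mul_le_mul_of_nonneg_right h4 hxinv.le
        _ = 1 := hxx
    have hc : 0 ≤ a^2*x⁻¹ := by positivity
    have m1 : (1+ε)*(a^2*x⁻¹) ≤ 2*(a^2*x⁻¹) :=
      mul_le_mul_of_nonneg_right (by linarith [hεb.2]) hc
    have m2 : (1-ε)*(a^2*x⁻¹) ≤ 2*(a^2*x⁻¹) :=
      mul_le_mul_of_nonneg_right (by linarith [hεb.1]) hc
    have m3 : 0 ≤ (1+ε)*(a^2*x⁻¹) := mul_nonneg (by linarith [hεb.1]) hc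
    have m4 : 0 ≤ (1-ε)*(a^2*x⁻¹) := mul_nonneg (by linarith [hεb.2]) hc
    refine ⟨?_, ?_, ?_, ?_⟩ <;>
      simp only [hαdef, hβdef] <;>
      linarith [m1, m2, m3, m4, h5, hξ]
  -- the energy
  set E : ℝ → ℝ := fun t => α t * X t^2 + β t * Y t^2 with hEdef
  have hinvc : ContinuousOn (fun t : ℝ => t⁻¹) (Ici (1:ℝ)) := by
    apply ContinuousOn.inv₀ continuousOn_id
    intro t ht
    have h1 : (1:ℝ) ≤ t := ht
    intro h
    simp only [id_eq] at h
    rw [h] at h1; linarith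
  have hαcont : ContinuousOn α (Ici 1) := by
    apply continuousOn_const.sub
    exact continuousOn_const.mul (continuousOn_const.mul hinvc)
  have hβcont : ContinuousOn β (Ici 1) := by
    apply continuousOn_const.sub
    exact continuousOn_const.mul (continuousOn_const.mul hinvc)
  have hEcont : ContinuousOn E (Ici 1) :=
    (hαcont.mul (hXcont.pow 2)).add (hβcont.mul (hYcont.pow 2))
  have hEd : ∀ t : ℝ, 1 < t → HasDerivAt E
      ((1+ε)*(a^2*(t^2)⁻¹) * X t^2 + (1-ε)*(a^2*(t^2)⁻¹) * Y t^2) t := by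
    intro t ht
    have h1 := ((hαd t ht).mul ((hX t ht).pow 2)).add ((hβd t ht).mul ((hY t ht).pow 2))
    convert h1 using 1
    · rfl
    · rfl
    · rfl
    push_cast
    simp only [Pi.pow_apply]
    ring
  -- phase 2 : antitone Lyapunov function on Ici T₀
  set G : ℝ → ℝ := fun t => E t * Real.exp (4*a^2*t⁻¹) with hGdef
  have hGd : ∀ t : ℝ, T₀ < t → HasDerivAt G
      (((1+ε)*(a^2*(t^2)⁻¹) * X t^2 + (1-ε)*(a^2*(t^2)⁻¹) * Y t^2) * Real.exp (4*a^2*t⁻¹)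
        + E t * (Real.exp (4*a^2*t⁻¹) * (4*a^2*(-(t^2)⁻¹)))) t := by
    intro t ht
    have ht1 : 1 < t := lt_of_le_of_lt hT₀1 ht
    have h1 : HasDerivAt (fun s : ℝ => Real.exp (4*a^2*s⁻¹))
        (Real.exp (4*a^2*t⁻¹) * (4*a^2*(-(t^2)⁻¹))) t :=
      ((hasDerivAt_inv (by linarith)).const_mul (4*a^2)).exp
    exact (hEd t ht1).mul h1
  have hGanti : AntitoneOn G (Ici T₀) := by
    apply antitoneOn_of_deriv_nonpos (convex_Ici T₀)
    · apply (hEcont.mono (Ici_subset_Ici.mpr hT₀1)).mul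
      exact Real.continuous_exp.comp_continuousOn
        (continuousOn_const.mul (hinvc.mono (Ici_subset_Ici.mpr hT₀1)))
    · rw [interior_Ici]
      intro x hx
      exact ((hGd x hx).differentiableAt).differentiableWithinAt
    · rw [interior_Ici]
      intro x hx
      rw [(hGd x hx).deriv]
      have hx1 : 1 < x := lt_of_le_of_lt hT₀1 hx
      have hx0 : 0 < x := by linarith
      obtain ⟨hα1, hα2, hβ1, hβ2⟩ := hαβ x (le_of_lt hx)
      have hc : (0:ℝ) ≤ a^2*(x^2)⁻¹ := by positivity
      have key : (1+ε)*(a^2*(x^2)⁻¹) * X x^2 + (1-ε)*(a^2*(x^2)⁻¹) * Y x^2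
          ≤ 4*a^2*(x^2)⁻¹ * E x := by
        simp only [hEdef]
        have hp : 0 ≤ a^2*(x^2)⁻¹ * X x^2 := mul_nonneg hc (sq_nonneg _)
        have hq : 0 ≤ a^2*(x^2)⁻¹ * Y x^2 := mul_nonneg hc (sq_nonneg _)
        have f1 := mul_le_mul_of_nonneg_left
          (mul_le_mul_of_nonneg_right hα1 (sq_nonneg (X x))) hc
        have f2 := mul_le_mul_of_nonneg_left
          (mul_le_mul_of_nonneg_right hβ1 (sq_nonneg (Y x))) hc
        have f3 : a^2*(x^2)⁻¹ * X x^2 ≤ ξ^2 * (a^2*(x^2)⁻¹ * X x^2) :=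
          le_mul_of_one_le_left hp hξ
        have f4 : a^2*(x^2)⁻¹ * Y x^2 ≤ ξ^2 * (a^2*(x^2)⁻¹ * Y x^2) :=
          le_mul_of_one_le_left hq hξ
        have f5 : (1+ε) * (a^2*(x^2)⁻¹ * X x^2) ≤ 2 * (a^2*(x^2)⁻¹ * X x^2) :=
          mul_le_mul_of_nonneg_right (by linarith [hεb.2]) hp
        have f6 : (1-ε) * (a^2*(x^2)⁻¹ * Y x^2) ≤ 2 * (a^2*(x^2)⁻¹ * Y x^2) :=
          mul_le_mul_of_nonneg_right (by linarith [hεb.1]) hq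
        nlinarith [f1, f2, f3, f4, f5, f6, hp, hq]
      have hP : (0:ℝ) < Real.exp (4*a^2*x⁻¹) := Real.exp_pos _
      linarith [mul_le_mul_of_nonneg_right key hP.le]
  -- phase 1 : crude Gronwall bound on Icc 1 T₀
  set N : ℝ → ℝ := fun t => X t^2 + Y t^2 with hNdef
  have hNcont : ContinuousOn N (Ici 1) := (hXcont.pow 2).add (hYcont.pow 2)
  have hNd : ∀ t : ℝ, 1 < t →
      HasDerivAt N (2*X t*(β t*Y t) + 2*Y t*(-(α t)*X t)) t := by
    intro t ht
    have h1 := ((hX t ht).pow 2).add ((hY t ht).pow 2)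
    convert h1 using 1
    · rfl
    · rfl
    · rfl
    push_cast
    ring
  set H : ℝ → ℝ := fun t => N t * Real.exp (-(2*a^2)*t) with hHdef
  have hHd : ∀ t : ℝ, 1 < t → HasDerivAt H
      ((2*X t*(β t*Y t) + 2*Y t*(-(α t)*X t)) * Real.exp (-(2*a^2)*t)
        + N t * (Real.exp (-(2*a^2)*t) * (-(2*a^2)*1))) t := by
    intro t ht
    have h1 : HasDerivAt (fun s : ℝ => Real.exp (-(2*a^2)*s))
        (Real.exp (-(2*a^2)*t) * (-(2*a^2)*1)) t :=
      ((hasDerivAt_id t).const_mul (-(2*a^2))).exp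
    exact (hNd t ht).mul h1
  have hHanti : AntitoneOn H (Icc 1 T₀) := by
    apply antitoneOn_of_deriv_nonpos (convex_Icc 1 T₀)
    · exact (hNcont.mono Icc_subset_Ici_self).mul
        (Real.continuous_exp.comp (continuous_const.mul continuous_id)).continuousOn
    · rw [interior_Icc]
      intro x hx
      exact ((hHd x hx.1).differentiableAt).differentiableWithinAt
    · rw [interior_Icc]
      intro x hx
      rw [(hHd x hx.1).deriv]
      have hx0 : 0 < x := by linarith [hx.1]
      have hxinv : 0 < x⁻¹ := inv_pos.mpr hx0
      have hxinv1 : x⁻¹ ≤ 1 := by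
        rw [inv_le_one_iff₀]
        right; linarith [hx.1]
      have hc : 0 ≤ a^2*x⁻¹ := by positivity
      have hca : a^2*x⁻¹ ≤ a^2 := by
        have := mul_le_mul_of_nonneg_left hxinv1 ha2.le
        linarith
      have key : 2*X x*(β x*Y x) + 2*Y x*(-(α x)*X x) ≤ 2*a^2 * N x := by
        simp only [hNdef, hαdef, hβdef]
        have f1 := mul_nonneg (mul_nonneg (by linarith [hεb.1] : (0:ℝ) ≤ 1+ε) hc)
          (sq_nonneg (X x - Y x))
        have f2 := mul_nonneg (mul_nonneg (by linarith [hεb.2] : (0:ℝ) ≤ 1-ε) hc)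
          (sq_nonneg (X x + Y x))
        have f3 := mul_nonneg (by linarith : (0:ℝ) ≤ a^2 - a^2*x⁻¹)
          (add_nonneg (sq_nonneg (X x)) (sq_nonneg (Y x)))
        nlinarith [f1, f2, f3]
      have hP : (0:ℝ) < Real.exp (-(2*a^2)*x) := Real.exp_pos _
      linarith [mul_le_mul_of_nonneg_right key hP.le]
  have hN1 : (0:ℝ) ≤ N 1 := by positivity
  have phase1 : ∀ t : ℝ, t ∈ Icc 1 T₀ → N t ≤ N 1 * Real.exp (2*a^2*T₀) := by
    intro t ht
    have h := hHanti (left_mem_Icc.mpr hT₀1) ht ht.1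
    have key1 : N t = H t * Real.exp (2*a^2*t) := by
      simp only [hHdef]
      rw [mul_assoc, ← Real.exp_add, show -(2*a^2)*t + 2*a^2*t = 0 by ring,
        Real.exp_zero, mul_one]
    have key2 : H 1 * Real.exp (2*a^2*t) = N 1 * Real.exp (2*a^2*t - 2*a^2) := by
      simp only [hHdef]
      rw [mul_assoc, ← Real.exp_add]
      ring_nf
    have key3 : Real.exp (2*a^2*t - 2*a^2) ≤ Real.exp (2*a^2*T₀) := by
      apply Real.exp_le_exp.mpr
      have := mul_le_mul_of_nonneg_left ht.2 (by positivity : (0:ℝ) ≤ 2*a^2)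
      linarith
    calc N t = H t * Real.exp (2*a^2*t) := key1
      _ ≤ H 1 * Real.exp (2*a^2*t) :=
          mul_le_mul_of_nonneg_right h (Real.exp_pos _).le
      _ = N 1 * Real.exp (2*a^2*t - 2*a^2) := key2
      _ ≤ N 1 * Real.exp (2*a^2*T₀) := mul_le_mul_of_nonneg_left key3 hN1
  have hnormSq : ∀ s : ℝ, Complex.normSq (u s) = N s := by
    intro s
    rw [Complex.normSq_apply]
    simp only [hNdef, hXdef, hYdef]
    ring
  clear_value X Y α β E G N H
  have phase2 : ∀ t : ℝ, T₀ ≤ t → N t ≤ 2*Real.exp 1 * N T₀ := by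
    intro t ht
    have hG := hGanti self_mem_Ici ht ht
    simp only [hGdef] at hG
    have ht0 : (0:ℝ) < t := by linarith
    obtain ⟨hα1, hα2, hβ1, hβ2⟩ := hαβ t ht
    obtain ⟨hα1', hα2', hβ1', hβ2'⟩ := hαβ T₀ le_rfl
    have hE0t : 0 ≤ E t := by
      simp only [hEdef]
      have f1 := mul_le_mul_of_nonneg_right hα1 (sq_nonneg (X t))
      have f2 := mul_le_mul_of_nonneg_right hβ1 (sq_nonneg (Y t))
      have f3 := mul_nonneg (by positivity : (0:ℝ) ≤ ξ^2/2) (sq_nonneg (X t))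
      have f4 := mul_nonneg (by positivity : (0:ℝ) ≤ ξ^2/2) (sq_nonneg (Y t))
      linarith
    have hexpt : (1:ℝ) ≤ Real.exp (4*a^2*t⁻¹) := Real.one_le_exp (by positivity)
    have hexpT : Real.exp (4*a^2*T₀⁻¹) ≤ Real.exp 1 := by
      apply Real.exp_le_exp.mpr
      have hT0 : (0:ℝ) < T₀ := by linarith
      have : 4*a^2*T₀⁻¹ ≤ T₀*T₀⁻¹ := by
        apply mul_le_mul_of_nonneg_right hT₀a (inv_pos.mpr hT0).le
      rw [mul_inv_cancel₀ (ne_of_gt hT0)] at this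
      linarith
    -- ξ² N t ≤ 2 E t ≤ 2 G t ≤ 2 G T₀ ≤ 2 exp 1 * E T₀ ≤ 2 exp 1 * ξ² * N T₀
    have s1 : ξ^2 * N t ≤ 2 * E t := by
      simp only [hEdef, hNdef]
      linarith [mul_le_mul_of_nonneg_right hα1 (sq_nonneg (X t)),
        mul_le_mul_of_nonneg_right hβ1 (sq_nonneg (Y t))]
    have s2 : E t ≤ E t * Real.exp (4*a^2*t⁻¹) := le_mul_of_one_le_right hE0t hexpt
    have hET0 : 0 ≤ E T₀ := by
      simp only [hEdef]
      have f1 := mul_le_mul_of_nonneg_right hα1' (sq_nonneg (X T₀))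
      have f2 := mul_le_mul_of_nonneg_right hβ1' (sq_nonneg (Y T₀))
      have f3 := mul_nonneg (by positivity : (0:ℝ) ≤ ξ^2/2) (sq_nonneg (X T₀))
      have f4 := mul_nonneg (by positivity : (0:ℝ) ≤ ξ^2/2) (sq_nonneg (Y T₀))
      linarith
    have s3 : E T₀ * Real.exp (4*a^2*T₀⁻¹) ≤ E T₀ * Real.exp 1 :=
      mul_le_mul_of_nonneg_left hexpT hET0
    have s4 : E T₀ ≤ ξ^2 * N T₀ := by
      simp only [hEdef, hNdef]
      linarith [mul_le_mul_of_nonneg_right hα2' (sq_nonneg (X T₀)),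
        mul_le_mul_of_nonneg_right hβ2' (sq_nonneg (Y T₀))]
    have hξ0 : (0:ℝ) < ξ^2 := by linarith
    have hexp1 : (0:ℝ) < Real.exp 1 := Real.exp_pos 1
    have h5 : ξ^2 * N t ≤ ξ^2 * (2*Real.exp 1 * N T₀) := by
      linarith [mul_le_mul_of_nonneg_right s4 hexp1.le, s1, s2, s3, hG]
    exact le_of_mul_le_mul_left h5 hξ0
  -- combine
  intro t ht
  rw [hnormSq, hnormSq]
  have h2e : (1:ℝ) ≤ 2*Real.exp 1 := by
    nlinarith [Real.one_le_exp (by norm_num : (0:ℝ) ≤ 1)]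
  have hexpK : (0:ℝ) < Real.exp (2*a^2*T₀) := Real.exp_pos _
  rcases le_total t T₀ with hc | hc
  · have h1 := phase1 t ⟨ht, hc⟩
    nlinarith [mul_nonneg hexpK.le hN1, h2e, h1]
  · have h2 := phase2 t hc
    have h1 := phase1 T₀ ⟨hT₀1, le_refl T₀⟩
    have h2e0 : (0:ℝ) ≤ 2*Real.exp 1 := by linarith
    linarith [mul_le_mul_of_nonneg_left h1 h2e0, h2]

/-- The combined constant for the sup bound. -/
def Ku (a : ℝ) : ℝ := 2 * Real.exp 1 * Real.exp (2*a^2*(max 1 (4*a^2)))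

lemma Ku_pos (a : ℝ) : 0 < Ku a := by
  unfold Ku; positivity

/-- Norm version of the energy bound. -/
lemma energy_norm (a ξ ε : ℝ) (ha : 0 < a) (hξ : 1 ≤ ξ^2) (hε : |ε| ≤ 1)
    (u : ℝ → ℂ)
    (hu : ∀ t ∈ Ici (1:ℝ), HasDerivWithinAt u
      (Complex.I * ((a^2/t - ξ^2 : ℝ) : ℂ) * u t
        + (ε:ℂ) * Complex.I * ((a^2/t : ℝ) : ℂ) * (starRingEnd ℂ) (u t)) (Ici 1) t) :
    ∀ t ∈ Ici (1:ℝ), ‖u t‖ ≤ Real.sqrt (Ku a) * ‖u 1‖ := by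
  intro t ht
  have h := energy a ξ ε ha hξ hε u hu t ht
  have h1 : ‖u t‖ = Real.sqrt (Complex.normSq (u t)) := by
    rw [Complex.norm_def]
  have h2 : ‖u 1‖ = Real.sqrt (Complex.normSq (u 1)) := by
    rw [Complex.norm_def]
  rw [h1, h2, ← Real.sqrt_mul (Ku_pos a).le]
  exact Real.sqrt_le_sqrt h

/-- Sup bound for the coupled system. -/
lemma supBound (a ξ : ℝ) (ha : 0 < a) (hξ : 1 ≤ ξ^2) (g h : ℝ → ℂ)
    (hg : ∀ t ∈ Ici (1:ℝ), HasDerivWithinAt g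
      (-(Complex.I * (ξ:ℂ)^2) * g t
        + Complex.I * (a:ℂ)^2 * (t:ℂ) ^ ((-1:ℂ) - 2*Complex.I*(a:ℂ)^2)
          * (starRingEnd ℂ) (h t)) (Ici 1) t)
    (hh : ∀ t ∈ Ici (1:ℝ), HasDerivWithinAt h
      (-(Complex.I * (ξ:ℂ)^2) * h t
        + Complex.I * (a:ℂ)^2 * (t:ℂ) ^ ((-1:ℂ) - 2*Complex.I*(a:ℂ)^2)
          * (starRingEnd ℂ) (g t)) (Ici 1) t) :
    ∀ t ∈ Ici (1:ℝ), ‖g t‖ + ‖h t‖ ≤ 2 * Real.sqrt (Ku a) * (‖g 1‖ + ‖h 1‖) := by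
  set m : ℝ → ℂ := fun t => Complex.exp ((Complex.I * (a:ℂ)^2) * (Real.log t : ℂ)) with hmdef
  -- basic facts about m
  have hmnorm : ∀ t : ℝ, ‖m t‖ = 1 := by
    intro t
    rw [hmdef]
    rw [norm_expLog]
    rw [show (Complex.I * (a:ℂ)^2).re = 0 from by simp [← Complex.ofReal_pow]]
    simp
  have hm1 : m 1 = 1 := by
    rw [hmdef]
    simp
  -- the key exponential identity : m t * t^c₂ = t⁻¹ * conj (m t) for t ≥ 1
  have hkey : ∀ t : ℝ, 1 ≤ t →
      m t * (t:ℂ) ^ ((-1:ℂ) - 2*Complex.I*(a:ℂ)^2) = ((t:ℂ))⁻¹ * (starRingEnd ℂ) (m t) := by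
    intro t ht
    have ht0 : (0:ℝ) < t := by linarith
    have htC : (t:ℂ) ≠ 0 := by
      simp only [ne_eq, Complex.ofReal_eq_zero]; linarith
    have hcp : (t:ℂ) ^ ((-1:ℂ) - 2*Complex.I*(a:ℂ)^2)
        = Complex.exp (((-1:ℂ) - 2*Complex.I*(a:ℂ)^2) * (Real.log t : ℂ)) := by
      rw [Complex.cpow_def_of_ne_zero htC, ← Complex.ofReal_log ht0.le, mul_comm]
    have hconj : (starRingEnd ℂ) (m t)
        = Complex.exp ((-(Complex.I * (a:ℂ)^2)) * (Real.log t : ℂ)) := by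
      rw [hmdef, ← Complex.exp_conj]
      congr 1
      simp [map_mul, Complex.conj_I, Complex.conj_ofReal]
    have hexp_t : Complex.exp (-(Real.log t : ℂ)) = ((t:ℂ))⁻¹ := by
      rw [Complex.exp_neg]
      congr 1
      rw [← Complex.ofReal_exp, Real.exp_log ht0]
    rw [hcp, hconj, hmdef, ← Complex.exp_add, ← hexp_t, ← Complex.exp_add]
    congr 1
    ring
  -- derivative of m
  have hmd : ∀ t : ℝ, 1 ≤ t →
      HasDerivAt m ((Complex.I * (a:ℂ)^2) / (t:ℂ) * m t) t := by
    intro t ht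
    exact hasDerivAt_expLog _ (by linarith)
  -- the two diagonalizing combinations
  have main : ∀ ε : ℝ, ε = 1 ∨ ε = -1 →
      ∀ t ∈ Ici (1:ℝ), ‖m t * (g t + (ε:ℂ) * h t)‖
        ≤ Real.sqrt (Ku a) * ‖m 1 * (g 1 + (ε:ℂ) * h 1)‖ := by
    intro ε hεcases
    have hε : |ε| ≤ 1 := by rcases hεcases with h1 | h1 <;> rw [h1] <;> norm_num
    set u : ℝ → ℂ := fun t => m t * (g t + (ε:ℂ) * h t) with hudef
    apply energy_norm a ξ ε ha hξ hε u
    intro t ht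
    have ht1 : (1:ℝ) ≤ t := ht
    have ht0 : (0:ℝ) < t := by linarith
    have htC : (t:ℂ) ≠ 0 := by
      simp only [ne_eq, Complex.ofReal_eq_zero]; linarith
    have hD := ((hmd t ht1).hasDerivWithinAt.mul
      ((hg t ht).add (((hh t ht).const_mul ((ε:ℂ))))))
    convert hD using 1
    · rfl
    · rfl
    have hck := hkey t ht1
    have hconju : (starRingEnd ℂ) (u t)
        = (starRingEnd ℂ) (m t) * ((starRingEnd ℂ) (g t) + (ε:ℂ) * (starRingEnd ℂ) (h t)) := by
      rw [hudef]
      simp only [map_mul, map_add]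
      rw [Complex.conj_ofReal]
    rw [hudef]
    simp only
    rw [hconju]
    push_cast
    have hε2 : ((ε:ℂ))^2 = 1 := by
      rcases hεcases with h1 | h1 <;> rw [h1] <;> norm_num
    simp only [Pi.add_apply]
    linear_combination (-(Complex.I*(a:ℂ)^2*((ε:ℂ) * (starRingEnd ℂ) (g t) + (starRingEnd ℂ) (h t)))) * hck
      + (Complex.I*(a:ℂ)^2*((t:ℂ))⁻¹* (starRingEnd ℂ) (m t) * (starRingEnd ℂ) (h t)) * hε2
  intro t ht
  have hp := main 1 (Or.inl rfl) t ht
  have hq := main (-1) (Or.inr rfl) t ht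
  rw [norm_mul, norm_mul, hmnorm t, hmnorm 1, one_mul, one_mul] at hp hq
  push_cast at hp hq
  rw [one_mul, one_mul] at hp
  have hq' : ‖g t - h t‖ ≤ Real.sqrt (Ku a) * ‖g 1 - h 1‖ := by
    have e1 : g t + (-1:ℂ) * h t = g t - h t := by ring
    have e2 : g 1 + (-1:ℂ) * h 1 = g 1 - h 1 := by ring
    rwa [e1, e2] at hq
  have n1 : ‖g t‖ ≤ (‖g t + h t‖ + ‖g t - h t‖)/2 := by
    have e : g t = ((g t + h t) + (g t - h t))/2 := by ring
    calc ‖g t‖ = ‖((g t + h t) + (g t - h t))/2‖ := by rw [← e]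
      _ = ‖(g t + h t) + (g t - h t)‖/2 := by
          rw [norm_div]; norm_num
      _ ≤ (‖g t + h t‖ + ‖g t - h t‖)/2 := by
          have := norm_add_le (g t + h t) (g t - h t)
          linarith
  have n2 : ‖h t‖ ≤ (‖g t + h t‖ + ‖g t - h t‖)/2 := by
    have e : h t = ((g t + h t) - (g t - h t))/2 := by ring
    calc ‖h t‖ = ‖((g t + h t) - (g t - h t))/2‖ := by rw [← e]
      _ = ‖(g t + h t) - (g t - h t)‖/2 := by
          rw [norm_div]; norm_num
      _ ≤ (‖g t + h t‖ + ‖g t - h t‖)/2 := by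
          have := norm_sub_le (g t + h t) (g t - h t)
          linarith
  have m1 : ‖g 1 + h 1‖ ≤ ‖g 1‖ + ‖h 1‖ := norm_add_le _ _
  have m2 : ‖g 1 - h 1‖ ≤ ‖g 1‖ + ‖h 1‖ := norm_sub_le _ _
  have hs : (0:ℝ) ≤ Real.sqrt (Ku a) := Real.sqrt_nonneg _
  have f1 := mul_le_mul_of_nonneg_left m1 hs
  have f2 := mul_le_mul_of_nonneg_left m2 hs
  linarith

lemma hasDerivAt_conj (h : ℝ → ℂ) (d : ℂ) (s : ℝ) (hd : HasDerivAt h d s) :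
    HasDerivAt (fun y => (starRingEnd ℂ) (h y)) ((starRingEnd ℂ) d) s :=
  (Complex.conjCLE.toContinuousLinearMap.hasFDerivAt.comp_hasDerivAt s hd :)

lemma hosc (ξ s : ℝ) : ‖Complex.exp (Complex.I * (s:ℂ) * (ξ:ℂ)^2)‖ = 1 := by
  rw [Complex.norm_exp]
  rw [show (Complex.I * (s:ℂ) * (ξ:ℂ)^2).re = 0 from by
    simp [← Complex.ofReal_pow, Complex.mul_re]]
  exact Real.exp_zero

lemma hcpow (a : ℝ) {s : ℝ} (hs : 1 ≤ s) :
    (s:ℂ) ^ ((-1:ℂ) - 2*Complex.I*(a:ℂ)^2)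
      = Complex.exp (((-1:ℂ) - 2*Complex.I*(a:ℂ)^2) * (Real.log s : ℂ)) := by
  have hs0 : (0:ℝ) < s := by linarith
  have hsC : (s:ℂ) ≠ 0 := by simp only [ne_eq, Complex.ofReal_eq_zero]; linarith
  rw [Complex.cpow_def_of_ne_zero hsC, ← Complex.ofReal_log hs0.le, mul_comm]

/-- Pointwise bound on the Duhamel-term integral. -/
lemma pointwiseBound (a ξ : ℝ) (ha : 0 < a) (hξ : 1 ≤ ξ^2) (g h : ℝ → ℂ)
    (hg : ∀ t ∈ Ici (1:ℝ), HasDerivWithinAt g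
      (-(Complex.I * (ξ:ℂ)^2) * g t
        + Complex.I * (a:ℂ)^2 * (t:ℂ) ^ ((-1:ℂ) - 2*Complex.I*(a:ℂ)^2)
          * (starRingEnd ℂ) (h t)) (Ici 1) t)
    (hh : ∀ t ∈ Ici (1:ℝ), HasDerivWithinAt h
      (-(Complex.I * (ξ:ℂ)^2) * h t
        + Complex.I * (a:ℂ)^2 * (t:ℂ) ^ ((-1:ℂ) - 2*Complex.I*(a:ℂ)^2)
          * (starRingEnd ℂ) (g t)) (Ici 1) t)
    (t₁ t₂ : ℝ) (ht1 : 1 ≤ t₁) (ht12 : t₁ ≤ t₂) :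
    ‖∫ s in t₁..t₂, Complex.exp (Complex.I * (s:ℂ) * (ξ:ℂ)^2) * (starRingEnd ℂ) (h s)
        * (s:ℂ) ^ ((-1:ℂ) - 2*Complex.I*(a:ℂ)^2)‖
      ≤ (3*(1+a^2) * (2*Real.sqrt (Ku a)) / t₁) * (‖g 1‖ + ‖h 1‖) := by
  have ht10 : (0:ℝ) < t₁ := by linarith
  have hgc : ContinuousOn g (Ici 1) := fun t ht => (hg t ht).continuousWithinAt
  have hhc : ContinuousOn h (Ici 1) := fun t ht => (hh t ht).continuousWithinAt
  have hsub : Icc t₁ t₂ ⊆ Ici (1:ℝ) := fun x hx => le_trans ht1 hx.1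
  set S : ℝ := 2 * Real.sqrt (Ku a) * (‖g 1‖ + ‖h 1‖) with hSdef
  have hS : ∀ t ∈ Ici (1:ℝ), ‖g t‖ + ‖h t‖ ≤ S := supBound a ξ ha hξ g h hg hh
  have hS0 : 0 ≤ S := le_trans (by positivity) (hS 1 self_mem_Ici)
  set c₂ : ℂ := (-1:ℂ) - 2*Complex.I*(a:ℂ)^2 with hc₂def
  set Q : ℝ → ℂ := fun s => Complex.exp (Complex.I * (s:ℂ) * (ξ:ℂ)^2) * (starRingEnd ℂ) (h s)
      * Complex.exp (c₂ * (Real.log s : ℂ)) with hQdef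
  set R : ℝ → ℂ := fun s => -(c₂/(s:ℂ)) * Q s + Complex.I*(a:ℂ)^2
      * Complex.exp (Complex.I * (s:ℂ) * (ξ:ℂ)^2)
      * Complex.exp ((-2:ℂ) * (Real.log s : ℂ)) * g s with hRdef
  set D : ℝ → ℂ := fun s => 2*Complex.I*(ξ:ℂ)^2 * Q s - R s with hDdef
  -- the integrand coincides with Q
  have hint_eq : ∫ s in t₁..t₂, Complex.exp (Complex.I * (s:ℂ) * (ξ:ℂ)^2)
      * (starRingEnd ℂ) (h s) * (s:ℂ) ^ ((-1:ℂ) - 2*Complex.I*(a:ℂ)^2)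
      = ∫ s in t₁..t₂, Q s := by
    apply intervalIntegral.integral_congr
    intro s hs
    rw [Set.uIcc_of_le ht12] at hs
    have hs1 : (1:ℝ) ≤ s := le_trans ht1 hs.1
    simp only [hQdef]
    rw [hcpow a hs1]
  -- continuity facts on [t₁,t₂]
  have hlogc : ContinuousOn (fun s : ℝ => (Real.log s : ℂ)) (Icc t₁ t₂) := by
    apply Complex.continuous_ofReal.comp_continuousOn
    apply Real.continuousOn_log.mono
    intro x hx
    simp only [mem_compl_iff, mem_singleton_iff]
    have : (1:ℝ) ≤ x := le_trans ht1 hx.1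
    intro hx0; rw [hx0] at this; linarith
  have hoscc : Continuous (fun s : ℝ => Complex.exp (Complex.I * (s:ℂ) * (ξ:ℂ)^2)) := by
    apply Complex.continuous_exp.comp
    continuity
  have hQc : ContinuousOn Q (Icc t₁ t₂) := by
    apply ContinuousOn.mul
    apply ContinuousOn.mul hoscc.continuousOn
    · exact (hhc.mono hsub).star
    · exact Complex.continuous_exp.comp_continuousOn (continuousOn_const.mul hlogc)
  have hsne : ∀ x ∈ Icc t₁ t₂, (x:ℂ) ≠ 0 := by
    intro x hx
    have : (1:ℝ) ≤ x := le_trans ht1 hx.1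
    simp only [ne_eq, Complex.ofReal_eq_zero]
    linarith
  have hRc : ContinuousOn R (Icc t₁ t₂) := by
    apply ContinuousOn.add
    · apply ContinuousOn.mul
      · apply ContinuousOn.neg
        exact continuousOn_const.div Complex.continuous_ofReal.continuousOn hsne
      · exact hQc
    · exact ((continuousOn_const.mul hoscc.continuousOn).mul
        (Complex.continuous_exp.comp_continuousOn (continuousOn_const.mul hlogc))).mul
        (hgc.mono hsub)
  have hDc : ContinuousOn D (Icc t₁ t₂) := (continuousOn_const.mul hQc).sub hRc
  -- derivative of Q on the open interval
  have hQd : ∀ s ∈ Ioo t₁ t₂, HasDerivWithinAt Q (D s) (Ioi s) s := by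
    intro s hs
    have hs1 : (1:ℝ) < s := lt_of_le_of_lt ht1 hs.1
    have hs0 : (0:ℝ) < s := by linarith
    have h1 : HasDerivAt (fun y : ℝ => Complex.exp (Complex.I * (y:ℂ) * (ξ:ℂ)^2))
        (Complex.I * (ξ:ℂ)^2 * Complex.exp (Complex.I * (s:ℂ) * (ξ:ℂ)^2)) s := by
      have hid : HasDerivAt (fun y : ℝ => ((y : ℝ) : ℂ)) 1 s := by
        simpa using (hasDerivAt_id s).ofReal_comp
      have h2 := ((hid.const_mul Complex.I).mul_const ((ξ:ℂ)^2)).cexp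
      convert h2 using 1
      ring
    have hdh := (hh s (le_of_lt hs1)).hasDerivAt (Ici_mem_nhds hs1)
    have h2 := hasDerivAt_conj h _ s hdh
    have h3 := hasDerivAt_expLog c₂ hs0
    have hprod := (h1.mul h2).mul h3
    apply HasDerivAt.hasDerivWithinAt
    convert hprod using 1
    · rfl
    · rfl
    have e1 : (starRingEnd ℂ) (Complex.exp (((-1:ℂ) - 2*Complex.I*(a:ℂ)^2) * (Real.log s : ℂ)))
        = Complex.exp (((-1:ℂ) + 2*Complex.I*(a:ℂ)^2) * (Real.log s : ℂ)) := by
      rw [← Complex.exp_conj]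
      congr 1
      simp only [map_mul, map_sub, map_add, map_neg, map_one, map_ofNat,
        Complex.conj_I, Complex.conj_ofReal, ← Complex.ofReal_pow]
      ring
    have hconjrhs : (starRingEnd ℂ) (-(Complex.I * (ξ:ℂ)^2) * h s
        + Complex.I * (a:ℂ)^2 * (s:ℂ) ^ ((-1:ℂ) - 2*Complex.I*(a:ℂ)^2) * (starRingEnd ℂ) (g s))
        = Complex.I * (ξ:ℂ)^2 * (starRingEnd ℂ) (h s)
          - Complex.I * (a:ℂ)^2
            * Complex.exp (((-1:ℂ) + 2*Complex.I*(a:ℂ)^2) * (Real.log s : ℂ)) * g s := by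
      rw [hcpow a (le_of_lt hs1)]
      simp only [map_add, map_mul, map_neg, Complex.conj_I, Complex.conj_conj, e1]
      rw [show (starRingEnd ℂ) ((ξ:ℂ)^2) = (ξ:ℂ)^2 from by
        rw [← Complex.ofReal_pow, Complex.conj_ofReal]]
      rw [show (starRingEnd ℂ) ((a:ℂ)^2) = (a:ℂ)^2 from by
        rw [← Complex.ofReal_pow, Complex.conj_ofReal]]
      ring
    rw [hconjrhs]
    have hE : Complex.exp (((-1:ℂ) + 2*Complex.I*(a:ℂ)^2) * (Real.log s:ℂ))
        * Complex.exp (c₂ * (Real.log s:ℂ)) = Complex.exp ((-2:ℂ) * (Real.log s:ℂ)) := by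
      rw [← Complex.exp_add]
      congr 1
      rw [hc₂def]
      ring
    simp only [hDdef, hRdef, hQdef]
    simp only [Pi.mul_apply]
    linear_combination (Complex.I*(a:ℂ)^2 * Complex.exp (Complex.I * (s:ℂ) * (ξ:ℂ)^2) * g s) * hE
  -- fundamental theorem of calculus
  have hDint : IntervalIntegrable D volume t₁ t₂ := by
    apply ContinuousOn.intervalIntegrable
    rwa [Set.uIcc_of_le ht12]
  have hRint : IntervalIntegrable R volume t₁ t₂ := by
    apply ContinuousOn.intervalIntegrable
    rwa [Set.uIcc_of_le ht12]
  have hftc : ∫ s in t₁..t₂, D s = Q t₂ - Q t₁ :=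
    intervalIntegral.integral_eq_sub_of_hasDeriv_right_of_le ht12 hQc hQd hDint
  -- algebraic resolution of the integral
  have hξC : (2*Complex.I*(ξ:ℂ)^2) ≠ 0 := by
    have hξne : ξ ≠ 0 := by
      intro hc; rw [hc] at hξ; norm_num at hξ
    have : ((ξ:ℂ))^2 ≠ 0 := pow_ne_zero _ (Complex.ofReal_ne_zero.mpr hξne)
    exact mul_ne_zero (mul_ne_zero two_ne_zero Complex.I_ne_zero) this
  have hQR : ∀ s : ℝ, Q s = (2*Complex.I*(ξ:ℂ)^2)⁻¹ * (D s + R s) := by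
    intro s
    simp only [hDdef]
    field_simp
    rw [sub_add_cancel, eq_div_iff (right_ne_zero_of_mul hξC)]
  have hsplit : ∫ s in t₁..t₂, Q s
      = (2*Complex.I*(ξ:ℂ)^2)⁻¹ * ((Q t₂ - Q t₁) + ∫ s in t₁..t₂, R s) := by
    rw [intervalIntegral.integral_congr (fun s _ => hQR s)]
    rw [intervalIntegral.integral_const_mul]
    rw [intervalIntegral.integral_add hDint hRint, hftc]
  -- norm computations
  have hQeq : ∀ s : ℝ, 1 ≤ s → ‖Q s‖ = ‖h s‖ * s⁻¹ := by
    intro s hs1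
    have hs0 : (0:ℝ) < s := by linarith
    simp only [hQdef]
    rw [norm_mul, norm_mul, hosc, one_mul, norm_expLog]
    rw [show c₂.re = -1 from by rw [hc₂def]; simp [← Complex.ofReal_pow]]
    rw [show (-1:ℝ)*Real.log s = -Real.log s from by ring, Real.exp_neg, Real.exp_log hs0]
    rw [RCLike.norm_conj]
  have hhb : ∀ s : ℝ, 1 ≤ s → ‖h s‖ ≤ S := fun s hs =>
    le_trans (le_add_of_nonneg_left (norm_nonneg _)) (hS s hs)
  have hgb : ∀ s : ℝ, 1 ≤ s → ‖g s‖ ≤ S := fun s hs =>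
    le_trans (le_add_of_nonneg_right (norm_nonneg _)) (hS s hs)
  have hQb : ∀ s ∈ Icc t₁ t₂, ‖Q s‖ ≤ S * t₁⁻¹ := by
    intro s hs
    have hs1 : (1:ℝ) ≤ s := le_trans ht1 hs.1
    rw [hQeq s hs1]
    exact mul_le_mul (hhb s hs1) (inv_anti₀ ht10 hs.1)
      (inv_nonneg.mpr (by linarith)) hS0
  have hc₂norm : ‖c₂‖ ≤ 1 + 2*a^2 := by
    apply le_trans (Complex.norm_le_abs_re_add_abs_im _)
    have hre : c₂.re = -1 := by rw [hc₂def]; simp [← Complex.ofReal_pow]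
    have him : c₂.im = -(2*a^2) := by rw [hc₂def]; simp [← Complex.ofReal_pow]
    rw [hre, him, abs_neg, abs_one, abs_neg, _root_.abs_of_nonneg (by positivity : (0:ℝ) ≤ 2*a^2)]
  have hEM2 : ∀ s : ℝ, 1 ≤ s →
      ‖Complex.exp ((-2:ℂ) * (Real.log s:ℂ))‖ = s⁻¹ * s⁻¹ := by
    intro s hs1
    have hs0 : (0:ℝ) < s := by linarith
    rw [norm_expLog]
    rw [show ((-2:ℂ)).re = -2 from by norm_num]
    rw [show (-2:ℝ)*Real.log s = -Real.log s + -Real.log s from by ring,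
      Real.exp_add, Real.exp_neg, Real.exp_log hs0]
  have hRb : ∀ s ∈ Icc t₁ t₂, ‖R s‖ ≤ (1+3*a^2) * S * ((s:ℝ)^(-2:ℤ)) := by
    intro s hs
    have hs1 : (1:ℝ) ≤ s := le_trans ht1 hs.1
    have hs0 : (0:ℝ) < s := by linarith
    have hz : (s:ℝ)^(-2:ℤ) = s⁻¹ * s⁻¹ := by
      rw [zpow_neg, zpow_two, mul_inv]
    simp only [hRdef]
    apply le_trans (norm_add_le _ _)
    have hsC : ‖(s:ℂ)‖ = s := by
      rw [Complex.norm_real, Real.norm_eq_abs, _root_.abs_of_pos hs0]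
    have hE2n : ‖Complex.exp (c₂ * (Real.log s : ℂ))‖ = s⁻¹ := by
      rw [norm_expLog, show c₂.re = -1 from by rw [hc₂def]; simp [← Complex.ofReal_pow],
        show (-1:ℝ)*Real.log s = -Real.log s from by ring, Real.exp_neg, Real.exp_log hs0]
    rw [norm_mul, norm_neg, norm_div, norm_mul, norm_mul, norm_mul, hosc]
    rw [RCLike.norm_conj, hE2n, hsC, norm_mul, norm_mul, hosc, hEM2 s hs1,
      norm_mul, Complex.norm_I, one_mul, norm_pow, Complex.norm_real,
      Real.norm_eq_abs, _root_.sq_abs, hz]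
    have his0 : (0:ℝ) ≤ s⁻¹ := inv_nonneg.mpr hs0.le
    have hdivinv : ‖c₂‖ / s = ‖c₂‖ * s⁻¹ := div_eq_mul_inv _ _
    rw [hdivinv]
    have k1 : ‖c₂‖ * ‖h s‖ ≤ (1+2*a^2) * S :=
      mul_le_mul hc₂norm (hhb s hs1) (norm_nonneg _) (by positivity)
    have k2 : a^2 * ‖g s‖ ≤ a^2 * S :=
      mul_le_mul_of_nonneg_left (hgb s hs1) (by positivity)
    have k1' := mul_le_mul_of_nonneg_right k1 (mul_nonneg his0 his0)
    have k2' := mul_le_mul_of_nonneg_right k2 (mul_nonneg his0 his0)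
    nlinarith [k1', k2']
  have hbndint : IntervalIntegrable (fun s : ℝ => (1+3*a^2) * S * ((s:ℝ)^(-2:ℤ)))
      volume t₁ t₂ := by
    apply ContinuousOn.intervalIntegrable
    apply ContinuousOn.mul continuousOn_const
    apply (continuousOn_zpow₀ (-2:ℤ)).mono
    intro x hx
    rw [Set.uIcc_of_le ht12] at hx
    simp only [mem_compl_iff, mem_singleton_iff]
    have : (1:ℝ) ≤ x := le_trans ht1 hx.1
    intro h0; rw [h0] at this; linarith
  have hintz : ∫ s in t₁..t₂, (1+3*a^2) * S * ((s:ℝ)^(-2:ℤ))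
      = (1+3*a^2) * S * (t₁⁻¹ - t₂⁻¹) := by
    rw [intervalIntegral.integral_const_mul]
    rw [integral_zpow (Or.inr ⟨by norm_num, by
      rw [Set.uIcc_of_le ht12]
      intro hmem
      exact absurd hmem.1 (by linarith)⟩)]
    norm_num
    left
    ring
  have hnormint : ‖∫ s in t₁..t₂, R s‖ ≤ (1+3*a^2) * S * t₁⁻¹ := by
    apply le_trans (intervalIntegral.norm_integral_le_integral_norm ht12)
    have hRnint : IntervalIntegrable (fun s => ‖R s‖) volume t₁ t₂ := by
      apply ContinuousOn.intervalIntegrable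
      rw [Set.uIcc_of_le ht12]
      exact hRc.norm
    have hmono := intervalIntegral.integral_mono_on ht12 hRnint hbndint hRb
    rw [hintz] at hmono
    have ht2inv : (0:ℝ) ≤ t₂⁻¹ := inv_nonneg.mpr (by linarith)
    nlinarith [hS0, ht2inv, mul_nonneg (by positivity : (0:ℝ) ≤ 1+3*a^2) (mul_nonneg hS0 ht2inv)]
  -- final assembly
  rw [hint_eq, hsplit, norm_mul]
  have hb1 : ‖Q t₁‖ ≤ S * t₁⁻¹ := hQb t₁ (left_mem_Icc.mpr ht12)
  have hb2 : ‖Q t₂‖ ≤ S * t₁⁻¹ := hQb t₂ (right_mem_Icc.mpr ht12)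
  have hnorminv : ‖(2*Complex.I*(ξ:ℂ)^2)⁻¹‖ ≤ 1/2 := by
    rw [norm_inv]
    have hn : ‖2*Complex.I*(ξ:ℂ)^2‖ = 2*ξ^2 := by
      rw [norm_mul, norm_mul, Complex.norm_I, norm_pow, Complex.norm_real,
        Real.norm_eq_abs, ← _root_.sq_abs]
      norm_num
    rw [hn]
    calc (2*ξ^2)⁻¹ ≤ 2⁻¹ := inv_anti₀ (by norm_num) (by linarith)
      _ = 1/2 := by norm_num
  have hW : ‖Q t₂ - Q t₁ + ∫ s in t₁..t₂, R s‖ ≤ (3+3*a^2) * S * t₁⁻¹ := by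
    apply le_trans (norm_add_le _ _)
    have h3 := norm_sub_le (Q t₂) (Q t₁)
    linarith [hb1, hb2, hnormint]
  calc ‖(2*Complex.I*(ξ:ℂ)^2)⁻¹‖ * ‖Q t₂ - Q t₁ + ∫ s in t₁..t₂, R s‖
      ≤ (1/2) * ((3+3*a^2) * S * t₁⁻¹) := by
        apply mul_le_mul hnorminv hW (norm_nonneg _) (by norm_num)
    _ ≤ 3*(1+a^2) * S * t₁⁻¹ := by
        nlinarith [mul_nonneg (mul_nonneg (by positivity : (0:ℝ) ≤ 1+a^2) hS0)
          (inv_nonneg.mpr ht10.le)]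
    _ = (3*(1+a^2) * (2*Real.sqrt (Ku a)) / t₁) * (‖g 1‖ + ‖h 1‖) := by
        rw [hSdef]
        ring

/-- **L² bound on the high-frequency part of the Duhamel term.** For `a > 0` there is a
constant `C > 0` depending only on `a` such that: if `F : [1,∞) × ℝ → ℂ` is measurable, with
`t ↦ F(t,ξ)` and `t ↦ F(t,−ξ)` of class `C¹` solving
`F_t(t,ξ) = −iξ² F(t,ξ) + ia² t^{−1−2ia²} conj(F(t,−ξ))` for a.e. `ξ`, and `F(1,·) ∈ L²(ℝ)`,
then for all `1 ≤ t₁ ≤ t₂` the function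
`A_{t₁,t₂}(ξ) = ∫_{t₁}^{t₂} e^{isξ²} conj(F(s,−ξ)) s^{−1−2ia²} ds` satisfies
`‖A_{t₁,t₂}‖_{L²(|ξ|≥1)} ≤ C t₁^{−1} ‖F(1,·)‖_{L²(ℝ)}`. -/
theorem stmt_8
    (a : ℝ) (ha : 0 < a) :
    ∃ C : ℝ, 0 < C ∧ ∀ F : ℝ → ℝ → ℂ,
      Measurable (fun p : ℝ × ℝ => F p.1 p.2) →
      (∀ᵐ ξ : ℝ, ∀ t ∈ Set.Ici (1:ℝ),
        HasDerivWithinAt (fun s => F s ξ)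
          (-(Complex.I * (ξ:ℂ)^2) * F t ξ
            + Complex.I * (a:ℂ)^2 * (t:ℂ) ^ ((-1:ℂ) - 2*Complex.I*(a:ℂ)^2)
                * (starRingEnd ℂ) (F t (-ξ))) (Set.Ici 1) t ∧
        HasDerivWithinAt (fun s => F s (-ξ))
          (-(Complex.I * (ξ:ℂ)^2) * F t (-ξ)
            + Complex.I * (a:ℂ)^2 * (t:ℂ) ^ ((-1:ℂ) - 2*Complex.I*(a:ℂ)^2)
                * (starRingEnd ℂ) (F t ξ)) (Set.Ici 1) t) →
      MemLp (F 1) 2 volume →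
      ∀ t₁ t₂ : ℝ, 1 ≤ t₁ → t₁ ≤ t₂ →
        eLpNorm (fun ξ : ℝ => ∫ s in t₁..t₂,
            Complex.exp (Complex.I * (s:ℂ) * (ξ:ℂ)^2) * (starRingEnd ℂ) (F s (-ξ))
              * (s:ℂ) ^ ((-1:ℂ) - 2*Complex.I*(a:ℂ)^2))
          2 (volume.restrict {ξ : ℝ | 1 ≤ |ξ|})
        ≤ ENNReal.ofReal (C / t₁) * eLpNorm (F 1) 2 volume := by
  set Cp : ℝ := 3*(1+a^2) * (2*Real.sqrt (Ku a)) with hCpdef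
  have hCp : 0 < Cp := by
    have h1 : 0 < Real.sqrt (Ku a) := Real.sqrt_pos.mpr (Ku_pos a)
    have h2 : (0:ℝ) < 3*(1+a^2) := by positivity
    exact mul_pos h2 (by linarith)
  refine ⟨2 * Cp, by linarith, ?_⟩
  intro F hFmeas hODE hF1 t₁ t₂ ht1 ht12
  have ht10 : (0:ℝ) < t₁ := by linarith
  have hmeas_set : MeasurableSet {ξ : ℝ | 1 ≤ |ξ|} :=
    (isClosed_le continuous_const _root_.continuous_abs).measurableSet
  -- measurability of F 1
  have hF1meas : Measurable (F 1) := by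
    have : Measurable (fun ξ : ℝ => F 1 ξ) :=
      hFmeas.comp (measurable_const.prodMk measurable_id)
    exact this
  have hFnegmeas : Measurable (fun ξ : ℝ => F 1 (-ξ)) := hF1meas.comp measurable_neg
  -- pointwise almost-everywhere bound
  have hae : ∀ᵐ (ξ : ℝ) ∂(volume.restrict {ξ : ℝ | 1 ≤ |ξ|}),
      ‖∫ s in t₁..t₂, Complex.exp (Complex.I * (s:ℂ) * (ξ:ℂ)^2)
          * (starRingEnd ℂ) (F s (-ξ)) * (s:ℂ) ^ ((-1:ℂ) - 2*Complex.I*(a:ℂ)^2)‖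
        ≤ (Cp / t₁) * (‖F 1 ξ‖ + ‖F 1 (-ξ)‖) := by
    filter_upwards [ae_restrict_of_ae hODE, ae_restrict_mem hmeas_set] with ξ hξode hξmem
    have habs : (1:ℝ) ≤ |ξ| := hξmem
    have hξ2 : 1 ≤ ξ^2 := by nlinarith [_root_.sq_abs ξ, abs_nonneg ξ]
    exact pointwiseBound a ξ ha hξ2 (fun t => F t ξ) (fun t => F t (-ξ))
      (fun t ht => (hξode t ht).1) (fun t ht => (hξode t ht).2) t₁ t₂ ht1 ht12
  -- L² estimates
  set K : ℝ → ℝ := fun ξ => ‖F 1 ξ‖ + ‖F 1 (-ξ)‖ with hKdef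
  have step1 : eLpNorm (fun ξ : ℝ => ∫ s in t₁..t₂,
      Complex.exp (Complex.I * (s:ℂ) * (ξ:ℂ)^2) * (starRingEnd ℂ) (F s (-ξ))
        * (s:ℂ) ^ ((-1:ℂ) - 2*Complex.I*(a:ℂ)^2)) 2 (volume.restrict {ξ : ℝ | 1 ≤ |ξ|})
      ≤ eLpNorm (fun ξ => (Cp/t₁) * K ξ) 2 (volume.restrict {ξ : ℝ | 1 ≤ |ξ|}) := by
    apply eLpNorm_mono_ae
    filter_upwards [hae] with ξ hξ
    rw [Real.norm_eq_abs]
    exact le_trans hξ (le_abs_self _)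
  have step2 : eLpNorm (fun ξ => (Cp/t₁) * K ξ) 2 (volume.restrict {ξ : ℝ | 1 ≤ |ξ|})
      = ENNReal.ofReal (Cp/t₁) * eLpNorm K 2 (volume.restrict {ξ : ℝ | 1 ≤ |ξ|}) := by
    have heq : (fun ξ => (Cp/t₁) * K ξ) = (Cp/t₁) • K := rfl
    rw [heq, eLpNorm_const_smul]
    congr 1
    rw [Real.enorm_eq_ofReal (by positivity)]
  have step3 : eLpNorm K 2 (volume.restrict {ξ : ℝ | 1 ≤ |ξ|})
      ≤ eLpNorm K 2 volume := eLpNorm_mono_measure K Measure.restrict_le_self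
  have step4 : eLpNorm K 2 volume
      ≤ eLpNorm (F 1) 2 volume + eLpNorm (F 1) 2 volume := by
    have hsum : eLpNorm K 2 volume = eLpNorm
        ((fun ξ : ℝ => ‖F 1 ξ‖) + (fun ξ : ℝ => ‖F 1 (-ξ)‖)) 2 volume := rfl
    rw [hsum]
    apply le_trans (eLpNorm_add_le (hF1meas.norm.aestronglyMeasurable)
      (hFnegmeas.norm.aestronglyMeasurable) one_le_two)
    rw [eLpNorm_norm, eLpNorm_norm]
    have hcomp : eLpNorm (fun ξ : ℝ => F 1 (-ξ)) 2 volume = eLpNorm (F 1) 2 volume := by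
      have : (fun ξ : ℝ => F 1 (-ξ)) = (F 1) ∘ (Neg.neg) := rfl
      rw [this]
      exact eLpNorm_comp_measurePreserving hF1meas.aestronglyMeasurable
        (Measure.measurePreserving_neg volume)
    rw [hcomp]
  -- combine
  calc eLpNorm _ 2 (volume.restrict {ξ : ℝ | 1 ≤ |ξ|})
      ≤ ENNReal.ofReal (Cp/t₁) * eLpNorm K 2 (volume.restrict {ξ : ℝ | 1 ≤ |ξ|}) := by
        rw [← step2]; exact step1
    _ ≤ ENNReal.ofReal (Cp/t₁) * (eLpNorm (F 1) 2 volume + eLpNorm (F 1) 2 volume) := by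
        apply mul_le_mul_right (le_trans step3 step4)
    _ = ENNReal.ofReal (2*Cp/t₁) * eLpNorm (F 1) 2 volume := by
        rw [show (2:ℝ)*Cp/t₁ = 2*(Cp/t₁) from by ring,
          ENNReal.ofReal_mul (by norm_num : (0:ℝ) ≤ 2), ENNReal.ofReal_ofNat]
        ring
  done
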